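/- Let A be an index type, let d ≥ 1 be a natural number, and let a : (A →₀ ℕ) → ℝ be a superexponential d-regular admissible positive function. Then the family (a_α^{−d})_{α ∈ A →₀ ℕ} is summable. -/

import Mathlib

/-- If `a : (A →₀ ℕ) → ℝ` is a superexponential `d`-regular admissible positive
function (with `d ≥ 1`), then the family `(a α ^ d)⁻¹` is summable. -/
theorem summable_of_superexponential_regular_admissible
    {A : Type*} (d : ℕ) (hd : 1 ≤ d) (a : (A →₀ ℕ) → ℝ)
    (hpos : ∀ α, 0 < a α)
    (h0 : a 0 = 1)
    (hgen : ∀ n : A, 1 < a (Finsupp.single n 1))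
    (hreg : Summable fun n : A => 1 / ((a (Finsupp.single n 1)) ^ d - 1))
    (hsup : ∀ α β : A →₀ ℕ, a α * a β ≤ a (α + β)) :
    Summable fun α : A →₀ ℕ => 1 / (a α) ^ d := by
  classical
  set c : A → ℝ := fun n => 1 / ((a (Finsupp.single n 1)) ^ d - 1) with hc
  have had : ∀ n, (1:ℝ) < a (Finsupp.single n 1) ^ d := fun n =>
    one_lt_pow₀ (hgen n) (by omega)
  have hcpos : ∀ n, 0 < c n := fun n => by
    simp only [hc]
    exact div_pos one_pos (by linarith [had n])
  set r : A → ℝ := fun n => ((a (Finsupp.single n 1)) ^ d)⁻¹ with hr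
  have hr0 : ∀ n, 0 ≤ r n := fun n => by
    have := hpos (Finsupp.single n 1); simp only [hr]; positivity
  have hr1 : ∀ n, r n < 1 := fun n => inv_lt_one_of_one_lt₀ (had n)
  have hinv : ∀ n, (1 - r n)⁻¹ = 1 + c n := by
    intro n
    have h1 : (0:ℝ) < a (Finsupp.single n 1) ^ d - 1 := by linarith [had n]
    have h2 : (0:ℝ) < a (Finsupp.single n 1) ^ d := by linarith [had n]
    simp only [hc, hr]
    field_simp
    ring
  have hsingle : ∀ (n : A) (k : ℕ), a (Finsupp.single n 1) ^ k ≤ a (Finsupp.single n k) := by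
    intro n k
    induction k with
    | zero => simp [h0]
    | succ k ih =>
      have hs : Finsupp.single n (k+1) = Finsupp.single n k + Finsupp.single n 1 := by
        rw [← Finsupp.single_add]
      rw [hs, pow_succ]
      calc a (Finsupp.single n 1) ^ k * a (Finsupp.single n 1)
          ≤ a (Finsupp.single n k) * a (Finsupp.single n 1) :=
            mul_le_mul_of_nonneg_right ih (hpos _).le
        _ ≤ _ := hsup _ _
  have hP : ∀ α : A →₀ ℕ, (α.prod fun n k => a (Finsupp.single n 1) ^ k) ≤ a α := by
    intro α
    induction α using Finsupp.induction with
    | zero => simp [h0]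
    | single_add n k f hnf hk ih =>
      rw [Finsupp.prod_add_index' (fun _ => pow_zero _) (fun _ _ _ => pow_add _ _ _)]
      rw [Finsupp.prod_single_index (h := fun m j => a (Finsupp.single m 1) ^ j) (pow_zero _)]
      have hPpos : 0 ≤ f.prod fun n k => a (Finsupp.single n 1) ^ k := by
        rw [Finsupp.prod]
        exact Finset.prod_nonneg fun m _ => by have := hpos (Finsupp.single m 1); positivity
      calc a (Finsupp.single n 1) ^ k * f.prod (fun n k => a (Finsupp.single n 1) ^ k)
          ≤ a (Finsupp.single n k) * a f :=
            mul_le_mul (hsingle n k) ih hPpos (hpos _).le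
        _ ≤ _ := hsup _ _
  set g : (A →₀ ℕ) → ℝ := fun α => α.prod fun n k => r n ^ k with hg
  have hgnn : ∀ α, 0 ≤ g α := fun α => by
    show (0:ℝ) ≤ α.prod fun n k => r n ^ k
    rw [Finsupp.prod]
    exact Finset.prod_nonneg fun n _ => pow_nonneg (hr0 n) _
  have hfg : ∀ α, 1 / (a α) ^ d ≤ g α := by
    intro α
    have hPpos : 0 < α.prod fun n k => a (Finsupp.single n 1) ^ k := by
      rw [Finsupp.prod]
      exact Finset.prod_pos fun m _ => by have := hpos (Finsupp.single m 1); positivity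
    have h1 : (α.prod fun n k => a (Finsupp.single n 1) ^ k) ^ d ≤ a α ^ d :=
      pow_le_pow_left₀ hPpos.le (hP α) d
    have h2 : ((a α) ^ d)⁻¹ ≤ ((α.prod fun n k => a (Finsupp.single n 1) ^ k) ^ d)⁻¹ :=
      inv_anti₀ (by positivity) h1
    rw [one_div]
    refine h2.trans (le_of_eq ?_)
    simp only [hg, hr, Finsupp.prod, ← Finset.prod_pow, ← Finset.prod_inv_distrib]
    refine Finset.prod_congr rfl fun n _ => ?_
    rw [inv_pow, ← pow_mul, Nat.mul_comm, pow_mul]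
  -- summability of g
  have hgsum : Summable g := by
    apply summable_of_sum_le (c := Real.exp (∑' n, c n)) hgnn
    intro u
    set T : Finset A := u.sup Finsupp.support with hT
    set N : ℕ := u.sup (fun α => T.sup fun n => α n) with hN
    have hsupp : ∀ α ∈ u, α.support ⊆ T := fun α hα => Finset.le_sup hα
    have hαN : ∀ α ∈ u, ∀ n ∈ T, α n ≤ N := fun α hα n hn =>
      le_trans (Finset.le_sup hn) (Finset.le_sup (f := fun α : A →₀ ℕ => T.sup fun m => α m) hα)
    have step1 : ∀ α ∈ u, g α = ∏ n ∈ T, r n ^ α n := fun α hα =>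
      Finsupp.prod_of_support_subset α (hsupp α hα) _ (fun n _ => pow_zero _)
    set φ : (A →₀ ℕ) → (∀ n ∈ T, ℕ) := fun α => fun n _ => α n with hφ
    have hφinj : Set.InjOn φ u := by
      intro α hα β hβ h
      ext n
      by_cases hn : n ∈ T
      · exact congrFun (congrFun h n) hn
      · rw [Finsupp.notMem_support_iff.mp (fun hmem => hn (hsupp α hα hmem)),
          Finsupp.notMem_support_iff.mp (fun hmem => hn (hsupp β hβ hmem))]
    have himg : u.image φ ⊆ T.pi fun _ => Finset.range (N+1) := by
      intro p hp
      obtain ⟨α, hα, rfl⟩ := Finset.mem_image.mp hp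
      rw [Finset.mem_pi]
      intro n hn
      exact Finset.mem_range.mpr (Nat.lt_succ_of_le (hαN α hα n hn))
    calc ∑ α ∈ u, g α = ∑ α ∈ u, ∏ n ∈ T, r n ^ α n := Finset.sum_congr rfl step1
      _ = ∑ p ∈ u.image φ, ∏ x ∈ T.attach, r x.1 ^ p x.1 x.2 := by
          rw [Finset.sum_image (fun α hα β hβ h => hφinj hα hβ h)]
          exact Finset.sum_congr rfl fun α hα => (Finset.prod_attach T fun n => r n ^ α n).symm
      _ ≤ ∑ p ∈ T.pi fun _ => Finset.range (N+1), ∏ x ∈ T.attach, r x.1 ^ p x.1 x.2 :=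
          Finset.sum_le_sum_of_subset_of_nonneg himg fun p _ _ =>
            Finset.prod_nonneg fun x _ => pow_nonneg (hr0 x.1) _
      _ = ∏ n ∈ T, ∑ k ∈ Finset.range (N+1), r n ^ k := (Finset.prod_sum T (fun _ => Finset.range (N+1)) (fun n k => r n ^ k)).symm
      _ ≤ ∏ n ∈ T, (1 + c n) := by
          refine Finset.prod_le_prod (fun n _ => Finset.sum_nonneg fun k _ =>
            pow_nonneg (hr0 n) _) fun n _ => ?_
          rw [← hinv n, ← tsum_geometric_of_lt_one (hr0 n) (hr1 n)]
          exact Summable.sum_le_tsum _ (fun k _ => pow_nonneg (hr0 n) _)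
            (summable_geometric_of_lt_one (hr0 n) (hr1 n))
      _ ≤ ∏ n ∈ T, Real.exp (c n) :=
          Finset.prod_le_prod (fun n _ => by linarith [(hcpos n).le]) fun n _ => by
            have := Real.add_one_le_exp (c n); linarith
      _ = Real.exp (∑ n ∈ T, c n) := (Real.exp_sum T c).symm
      _ ≤ Real.exp (∑' n, c n) :=
          Real.exp_le_exp.mpr (Summable.sum_le_tsum T (fun n _ => (hcpos n).le) hreg)
  exact hgsum.of_nonneg_of_le (fun α => by have := hpos α; positivity) hfg
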